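/- With u a draw from a (κ, X^{s,q}) measure (coefficients u_l = l^{-(s/d+1/2-1/q)} κ^{-1/q} ξ_l with ξ_l i.i.d. with density ∝ exp(-|x|^q/2)), for any t < s - d/q and any α ∈ (0, κ/2), one has E[exp(α ‖u‖_{X^{t,q}}^q)] < ∞. -/

import Mathlib

open MeasureTheory Real ProbabilityTheory
open scoped ENNReal


lemma aux_tsum_toReal {f : ℕ → ℝ} (hf : ∀ n, 0 ≤ f n) :
    ∑' n, f n = (∑' n, ENNReal.ofReal (f n)).toReal := by
  by_cases hs : Summable f
  · rw [← ENNReal.ofReal_tsum_of_nonneg hf hs, ENNReal.toReal_ofReal (tsum_nonneg hf)]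
  · rw [tsum_eq_zero_of_not_summable hs]
    have htop : (∑' n, ENNReal.ofReal (f n)) = ∞ := by
      by_contra h
      apply hs
      have h2 : Summable (fun n => (f n).toNNReal) := by
        rw [← ENNReal.tsum_coe_ne_top_iff_summable]
        simpa [ENNReal.ofReal] using h
      have := (NNReal.summable_coe).2 h2
      refine this.congr fun n => ?_
      simp [Real.coe_toNNReal _ (hf n)]
    simp [htop]

lemma aux_exp_ineq {T bn bb c : ℝ} (hc : 0 ≤ c) (hT : 0 ≤ T) (hbn0 : 0 ≤ bn) (hbn : bn ≤ bb) :
    c * exp (-T/2) * exp (bn*T) ≤ c * exp (-T/2) + bn * (c * (T * exp (-(1/2 - bb) * T))) := by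
  have hy : 0 ≤ bn * T := mul_nonneg hbn0 hT
  have h0 : 1 - bn*T ≤ exp (-(bn*T)) := by linarith [Real.add_one_le_exp (-(bn*T))]
  have h2 : (1 - bn*T) * exp (bn*T) ≤ 1 := by
    have := mul_le_mul_of_nonneg_right h0 (exp_pos (bn*T)).le
    rwa [← exp_add, neg_add_cancel, exp_zero] at this
  have h1 : exp (bn*T) - 1 ≤ bn*T * exp (bn*T) := by nlinarith
  have h3 : exp (bn*T) * exp (-T/2) ≤ exp (-(1/2 - bb) * T) := by
    rw [← exp_add]
    apply exp_le_exp.2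
    nlinarith [mul_le_mul_of_nonneg_right hbn hT]
  have h4 : c * exp (-T/2) * (exp (bn*T) - 1) ≤ bn * (c * (T * exp (-(1/2 - bb) * T))) := by
    calc c * exp (-T/2) * (exp (bn*T) - 1) ≤ c * exp (-T/2) * (bn*T * exp (bn*T)) := by
          apply mul_le_mul_of_nonneg_left h1 (by positivity)
      _ = bn * (c * (T * (exp (bn*T) * exp (-T/2)))) := by ring
      _ ≤ bn * (c * (T * exp (-(1/2 - bb) * T))) := by
          apply mul_le_mul_of_nonneg_left _ hbn0
          apply mul_le_mul_of_nonneg_left _ hc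
          exact mul_le_mul_of_nonneg_left h3 hT
  nlinarith [h4]

lemma aux_integrable {q b : ℝ} (hq : 1 ≤ q) (hb : 0 < b) :
    Integrable (fun x : ℝ => |x| ^ q * exp (-b * |x| ^ q)) := by
  have hIoi : IntegrableOn (fun x : ℝ => |x| ^ q * exp (-b * |x| ^ q)) (Set.Ioi 0) := by
    apply (integrableOn_rpow_mul_exp_neg_mul_rpow (by linarith : (-1:ℝ) < q) (by linarith : (0:ℝ) < q) hb).congr_fun
      _ measurableSet_Ioi
    intro x hx
    simp [abs_of_pos (Set.mem_Ioi.mp hx)]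
  rw [← integrableOn_univ, ← Set.Iio_union_Ici (a := (0:ℝ)), integrableOn_union,
    integrableOn_Ici_iff_integrableOn_Ioi]
  refine ⟨?_, hIoi⟩
  rw [← (Measure.measurePreserving_neg (volume : Measure ℝ)).integrableOn_comp_preimage
      (Homeomorph.neg ℝ).measurableEmbedding]
  simp only [Function.comp_def, abs_neg, Set.neg_preimage, Set.neg_Iio, neg_zero]
  exact hIoi

lemma aux_prod_lintegral {Ω : Type*} [MeasurableSpace Ω] {P : Measure Ω} [IsProbabilityMeasure P]
    (η : ℕ → Ω → ℝ≥0∞) (hmeas : ∀ n, Measurable (η n))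
    (hindep : iIndepFun η P) (N : ℕ) :
    ∫⁻ ω, ∏ n ∈ Finset.range N, η n ω ∂P = ∏ n ∈ Finset.range N, ∫⁻ ω, η n ω ∂P := by
  induction N with
  | zero => simp
  | succ N ih =>
    have hprodmeas : Measurable (∏ n ∈ Finset.range N, η n) := by
      rw [Finset.prod_fn]
      exact Finset.measurable_prod _ fun i _ => hmeas i
    have hindepN : IndepFun (∏ n ∈ Finset.range N, η n) (η N) P :=
      hindep.indepFun_prod_range_succ hmeas N
    have := lintegral_mul_eq_lintegral_mul_lintegral_of_indepFun hprodmeas (hmeas N) hindepN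
    simp only [Finset.prod_range_succ]
    rw [← ih]
    rw [show (∫⁻ ω, (∏ n ∈ Finset.range N, η n ω) * η N ω ∂P)
        = ∫⁻ ω, ((∏ n ∈ Finset.range N, η n) * η N) ω ∂P by
      refine lintegral_congr fun ω => ?_
      simp [Finset.prod_apply]]
    rw [this]
    congr 1
    refine lintegral_congr fun ω => ?_
    simp [Finset.prod_apply]

lemma aux_sup_ofReal_exp {h : ℕ → ℝ} (hnn : ∀ n, 0 ≤ h n) (hsum : Summable h) :
    (⨆ N, ENNReal.ofReal (exp (∑ n ∈ Finset.range N, h n)))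
      = ENNReal.ofReal (exp (∑' n, h n)) := by
  have hmono : Monotone fun N => ENNReal.ofReal (exp (∑ n ∈ Finset.range N, h n)) := by
    intro a b hab
    apply ENNReal.ofReal_le_ofReal
    apply exp_le_exp.2
    exact Finset.sum_le_sum_of_subset_of_nonneg (Finset.range_subset_range.2 hab)
      fun i _ _ => hnn i
  have htendsto : Filter.Tendsto (fun N => ENNReal.ofReal (exp (∑ n ∈ Finset.range N, h n)))
      Filter.atTop (nhds (ENNReal.ofReal (exp (∑' n, h n)))) := by
    exact (ENNReal.continuous_ofReal.tendsto _).comp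
      ((Real.continuous_exp.tendsto _).comp hsum.hasSum.tendsto_sum_nat)
  exact tendsto_nhds_unique (tendsto_atTop_iSup hmono) htendsto


lemma aux_factor {Ω : Type*} [MeasurableSpace Ω] (P : Measure Ω) [IsProbabilityMeasure P]
    (q c bn bb : ℝ) (hq : 1 ≤ q) (hc : 0 < c) (hbn0 : 0 ≤ bn) (hbn : bn ≤ bb)
    (ξ : Ω → ℝ) (hξ : Measurable ξ)
    (hd : Measure.map ξ P
      = volume.withDensity (fun x => ENNReal.ofReal (c * Real.exp (-(|x| ^ q) / 2)))) :
    ∫⁻ ω, ENNReal.ofReal (exp (bn * |ξ ω| ^ q)) ∂P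
      ≤ 1 + ENNReal.ofReal bn
          * ∫⁻ x : ℝ, ENNReal.ofReal (c * (|x| ^ q * exp (-(1/2 - bb) * |x| ^ q))) ∂volume := by
  have habs : Measurable fun x : ℝ => |x| ^ q := (measurable_id.abs).pow_const q
  have hmf : Measurable fun x : ℝ => ENNReal.ofReal (exp (bn * |x| ^ q)) :=
    ((habs.const_mul bn).exp).ennreal_ofReal
  have hdens_meas : Measurable fun x : ℝ => ENNReal.ofReal (c * Real.exp (-(|x| ^ q) / 2)) :=
    (((habs.neg.div_const 2).exp).const_mul c).ennreal_ofReal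
  have hCmeas : Measurable fun x : ℝ =>
      ENNReal.ofReal (c * (|x| ^ q * exp (-(1/2 - bb) * |x| ^ q))) :=
    ((habs.mul ((habs.const_mul _).exp)).const_mul c).ennreal_ofReal
  have hdens1 : ∫⁻ x : ℝ, ENNReal.ofReal (c * Real.exp (-(|x| ^ q) / 2)) ∂volume = 1 := by
    have hpm : IsProbabilityMeasure (Measure.map ξ P) :=
      Measure.isProbabilityMeasure_map hξ.aemeasurable
    have := hpm.measure_univ
    rw [hd, withDensity_apply _ MeasurableSet.univ, setLIntegral_univ] at this
    exact this
  calc ∫⁻ ω, ENNReal.ofReal (exp (bn * |ξ ω| ^ q)) ∂P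
      = ∫⁻ x, ENNReal.ofReal (exp (bn * |x| ^ q)) ∂(Measure.map ξ P) :=
        (lintegral_map hmf hξ).symm
    _ = ∫⁻ x, ((fun x => ENNReal.ofReal (c * Real.exp (-(|x| ^ q) / 2))) *
          (fun x => ENNReal.ofReal (exp (bn * |x| ^ q)))) x ∂volume := by
        rw [hd, lintegral_withDensity_eq_lintegral_mul volume hdens_meas hmf]
    _ ≤ ∫⁻ x, (ENNReal.ofReal (c * Real.exp (-(|x| ^ q) / 2)) +
          ENNReal.ofReal bn *
            ENNReal.ofReal (c * (|x| ^ q * exp (-(1/2 - bb) * |x| ^ q)))) ∂volume := by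
        apply lintegral_mono
        intro x
        have hT : (0:ℝ) ≤ |x| ^ q := Real.rpow_nonneg (abs_nonneg x) q
        simp only [Pi.mul_apply]
        rw [← ENNReal.ofReal_mul (by positivity), ← ENNReal.ofReal_mul hbn0,
          ← ENNReal.ofReal_add (by positivity) (by positivity)]
        apply ENNReal.ofReal_le_ofReal
        have := aux_exp_ineq (T := |x| ^ q) hc.le hT hbn0 hbn
        calc c * Real.exp (-(|x| ^ q) / 2) * exp (bn * |x| ^ q)
            ≤ c * exp (-(|x| ^ q)/2) + bn * (c * (|x| ^ q * exp (-(1/2 - bb) * |x| ^ q))) := this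
          _ = c * Real.exp (-(|x| ^ q) / 2) + bn * (c * (|x| ^ q * exp (-(1/2 - bb) * |x| ^ q))) := by
              ring_nf
    _ = 1 + ENNReal.ofReal bn
          * ∫⁻ x : ℝ, ENNReal.ofReal (c * (|x| ^ q * exp (-(1/2 - bb) * |x| ^ q))) ∂volume := by
        rw [lintegral_add_left hdens_meas, hdens1, lintegral_const_mul _ hCmeas]

lemma aux_coef (q s t κ : ℝ) (d : ℕ) (hd : 1 ≤ d) (hq : 1 ≤ q) (hκ : 0 < κ)
    (α : ℝ) (n : ℕ) (z : ℝ) :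
    α * (((n:ℝ) + 1) ^ (t * q / (d : ℝ) + q / 2 - 1) *
        |((n:ℝ) + 1) ^ (-(s / (d : ℝ) + 1 / 2 - 1 / q)) * κ ^ (-(1 / q)) * z| ^ q)
      = (α / κ) * ((n:ℝ) + 1) ^ (-((s - t) * q / (d : ℝ))) * |z| ^ q := by
  have hA : (0:ℝ) < (n:ℝ) + 1 := by positivity
  have hq0 : (0:ℝ) < q := lt_of_lt_of_le one_pos hq
  have hd0 : (0:ℝ) < (d:ℝ) := by exact_mod_cast Nat.lt_of_lt_of_le Nat.zero_lt_one hd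
  have e1 : |((n:ℝ) + 1) ^ (-(s / (d : ℝ) + 1 / 2 - 1 / q)) * κ ^ (-(1 / q)) * z|
      = ((n:ℝ) + 1) ^ (-(s / (d : ℝ) + 1 / 2 - 1 / q)) * κ ^ (-(1 / q)) * |z| := by
    rw [abs_mul, abs_mul, abs_of_pos (Real.rpow_pos_of_pos hA _),
      abs_of_pos (Real.rpow_pos_of_pos hκ _)]
  rw [e1, Real.mul_rpow (by positivity) (abs_nonneg z),
    Real.mul_rpow (by positivity) (by positivity),
    ← Real.rpow_mul hA.le, ← Real.rpow_mul hκ.le,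
    show -(1 / q) * q = (-1:ℝ) by field_simp, Real.rpow_neg_one]
  have e3 : ((n:ℝ) + 1) ^ (t * q / (d : ℝ) + q / 2 - 1)
        * ((n:ℝ) + 1) ^ (-(s / (d : ℝ) + 1 / 2 - 1 / q) * q)
      = ((n:ℝ) + 1) ^ (-((s - t) * q / (d : ℝ))) := by
    rw [← Real.rpow_add hA]
    congr 1
    field_simp
    ring
  calc α * (((n:ℝ) + 1) ^ (t * q / (d : ℝ) + q / 2 - 1) *
        (((n:ℝ) + 1) ^ (-(s / (d : ℝ) + 1 / 2 - 1 / q) * q) * κ⁻¹ * |z| ^ q))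
      = α * κ⁻¹ * (((n:ℝ) + 1) ^ (t * q / (d : ℝ) + q / 2 - 1)
        * ((n:ℝ) + 1) ^ (-(s / (d : ℝ) + 1 / 2 - 1 / q) * q)) * |z| ^ q := by ring
    _ = (α / κ) * ((n:ℝ) + 1) ^ (-((s - t) * q / (d : ℝ))) * |z| ^ q := by
        rw [e3]; field_simp
theorem besov_exp_moment_finite
    {Ω : Type*} [MeasurableSpace Ω] (P : Measure Ω) [IsProbabilityMeasure P]
    (q s t κ : ℝ) (d : ℕ) (hd : 1 ≤ d) (hq : 1 ≤ q) (hs : 0 < s) (hκ : 0 < κ)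
    (ht : t < s - (d : ℝ) / q)
    (c : ℝ) (hc : 0 < c)
    (ξ : ℕ → Ω → ℝ) (hmeas : ∀ l, Measurable (ξ l))
    (hindep : iIndepFun ξ P)
    (hdens : ∀ l, Measure.map (ξ l) P
      = volume.withDensity (fun x => ENNReal.ofReal (c * Real.exp (-(|x| ^ q) / 2))))
    (α : ℝ) (hα0 : 0 < α) (hα : α < κ / 2) :
    Integrable (fun ω => Real.exp (α * ∑' n : ℕ,
      ((n : ℝ) + 1) ^ (t * q / (d : ℝ) + q / 2 - 1) *
        |((n : ℝ) + 1) ^ (-(s / (d : ℝ) + 1 / 2 - 1 / q)) * κ ^ (-(1 / q)) * ξ n ω| ^ q)) P := by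
  have hq0 : (0:ℝ) < q := lt_of_lt_of_le one_pos hq
  have hd0 : (0:ℝ) < (d:ℝ) := by exact_mod_cast Nat.lt_of_lt_of_le Nat.zero_lt_one hd
  -- the exponent r and its basic property
  have hr : 1 < (s - t) * q / (d:ℝ) := by
    rw [lt_div_iff₀ hd0]
    have h1 : (d:ℝ)/q < s - t := by linarith
    rw [div_lt_iff₀ hq0] at h1
    linarith
  -- the coefficients
  set bb : ℝ := α / κ with hbbdef
  have hbb0 : 0 < bb := div_pos hα0 hκ
  have hbb : bb < 1/2 := by rw [hbbdef, div_lt_iff₀ hκ]; linarith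
  set β : ℕ → ℝ := fun n => α / κ * ((n:ℝ) + 1) ^ (-((s - t) * q / (d:ℝ))) with hβdef
  have hβ0 : ∀ n, 0 ≤ β n := fun n =>
    le_of_lt (mul_pos hbb0 (Real.rpow_pos_of_pos (by positivity) _))
  have hβle : ∀ n, β n ≤ bb := by
    intro n
    have h1 : ((n:ℝ) + 1) ^ (-((s - t) * q / (d:ℝ))) ≤ 1 :=
      Real.rpow_le_one_of_one_le_of_nonpos (by simp) (by linarith)
    calc β n ≤ α / κ * 1 := mul_le_mul_of_nonneg_left h1 hbb0.le
      _ = bb := by rw [mul_one]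
  have hβsum : Summable β := by
    apply Summable.mul_left
    have h1 : Summable (fun n : ℕ => (n:ℝ) ^ (-((s - t) * q / (d:ℝ)))) :=
      Real.summable_nat_rpow.2 (by linarith)
    have h2 := (summable_nat_add_iff 1).2 h1
    refine h2.congr fun n => ?_
    push_cast
    ring_nf
  -- the summands
  set h : ℕ → Ω → ℝ := fun n ω => β n * |ξ n ω| ^ q with hhdef
  have hh0 : ∀ n ω, 0 ≤ h n ω := fun n ω =>
    mul_nonneg (hβ0 n) (Real.rpow_nonneg (abs_nonneg _) q)
  have hhmeas : ∀ n, Measurable (h n) := fun n =>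
    (((hmeas n).abs).pow_const q).const_mul _
  have key : ∀ (n : ℕ) (ω : Ω), α *
      (((n : ℝ) + 1) ^ (t * q / (d : ℝ) + q / 2 - 1) *
        |((n : ℝ) + 1) ^ (-(s / (d : ℝ) + 1 / 2 - 1 / q)) * κ ^ (-(1 / q)) * ξ n ω| ^ q)
        = h n ω := fun n ω => aux_coef q s t κ d hd hq hκ α n (ξ n ω)
  have hFun : (fun ω => Real.exp (α * ∑' n : ℕ,
      ((n : ℝ) + 1) ^ (t * q / (d : ℝ) + q / 2 - 1) *
        |((n : ℝ) + 1) ^ (-(s / (d : ℝ) + 1 / 2 - 1 / q)) * κ ^ (-(1 / q)) * ξ n ω| ^ q))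
      = fun ω => exp (∑' n, h n ω) := by
    funext ω
    congr 1
    rw [← tsum_mul_left]
    exact tsum_congr fun n => key n ω
  rw [hFun]
  -- the ENNReal-valued factors
  set η : ℕ → Ω → ℝ≥0∞ := fun n ω => ENNReal.ofReal (exp (h n ω)) with hηdef
  have hηmeas : ∀ n, Measurable (η n) := fun n => ((hhmeas n).exp).ennreal_ofReal
  have hηindep : iIndepFun η P := by
    have := hindep.comp (fun n x => ENNReal.ofReal (exp (β n * |x| ^ q)))
      (fun n => (((measurable_id.abs).pow_const q).const_mul _).exp.ennreal_ofReal)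
    exact this
  have hprod := aux_prod_lintegral η hηmeas hηindep
  -- uniform bound on the partial products
  set C0 : ℝ≥0∞ :=
    ∫⁻ x : ℝ, ENNReal.ofReal (c * (|x| ^ q * exp (-(1/2 - bb) * |x| ^ q))) ∂volume with hC0def
  have hC0lt : C0 < ∞ := by
    have hint : Integrable (fun x : ℝ => c * (|x| ^ q * exp (-(1/2 - bb) * |x| ^ q))) :=
      (aux_integrable hq (by linarith : (0:ℝ) < 1/2 - bb)).const_mul c
    exact hint.lintegral_lt_top
  set C : ℝ := C0.toReal with hCdef
  have hC0' : C0 = ENNReal.ofReal C := (ENNReal.ofReal_toReal hC0lt.ne).symm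
  have hCnn : 0 ≤ C := ENNReal.toReal_nonneg
  set B : ℝ := ∑' n, β n with hBdef
  set K : ℝ≥0∞ := ENNReal.ofReal (exp (B * C)) with hKdef
  have hfac : ∀ n, ∫⁻ ω, η n ω ∂P ≤ ENNReal.ofReal (1 + β n * C) := by
    intro n
    have := aux_factor P q c (β n) bb hq hc (hβ0 n) (hβle n) (ξ n) (hmeas n) (hdens n)
    calc ∫⁻ ω, η n ω ∂P ≤ 1 + ENNReal.ofReal (β n) * C0 := this
      _ = ENNReal.ofReal (1 + β n * C) := by
          rw [hC0', ← ENNReal.ofReal_mul (hβ0 n), ← ENNReal.ofReal_one,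
            ← ENNReal.ofReal_add zero_le_one (mul_nonneg (hβ0 n) hCnn)]
  have hbound : ∀ N, ∫⁻ ω, ∏ n ∈ Finset.range N, η n ω ∂P ≤ K := by
    intro N
    rw [hprod N]
    calc ∏ n ∈ Finset.range N, ∫⁻ ω, η n ω ∂P
        ≤ ∏ n ∈ Finset.range N, ENNReal.ofReal (1 + β n * C) :=
          Finset.prod_le_prod' fun i _ => hfac i
      _ = ENNReal.ofReal (∏ n ∈ Finset.range N, (1 + β n * C)) :=
          (ENNReal.ofReal_prod_of_nonneg fun i _ => by positivity).symm
      _ ≤ K := by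
          apply ENNReal.ofReal_le_ofReal
          calc ∏ n ∈ Finset.range N, (1 + β n * C)
              ≤ ∏ n ∈ Finset.range N, exp (β n * C) := by
                apply Finset.prod_le_prod (fun i _ => by positivity)
                intro i _
                linarith [Real.add_one_le_exp (β i * C)]
            _ = exp (∑ n ∈ Finset.range N, β n * C) := (Real.exp_sum _ _).symm
            _ ≤ exp (B * C) := by
                apply exp_le_exp.2
                rw [← Finset.sum_mul]
                apply mul_le_mul_of_nonneg_right _ hCnn
                exact hβsum.sum_le_tsum _ (fun i _ => hβ0 i)
  -- monotone convergence
  have hPmeas : ∀ N, Measurable fun ω => ∏ n ∈ Finset.range N, η n ω := fun N =>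
    Finset.measurable_prod _ fun i _ => hηmeas i
  have hη1 : ∀ n ω, 1 ≤ η n ω := by
    intro n ω
    apply ENNReal.one_le_ofReal.2
    have := Real.exp_le_exp.2 (hh0 n ω)
    simpa using this
  have hPmono : Monotone fun N => fun ω => ∏ n ∈ Finset.range N, η n ω := by
    intro N M hNM ω
    exact Finset.prod_le_prod_of_subset_of_one_le' (Finset.range_subset_range.2 hNM)
      fun i _ _ => hη1 i ω
  have hsup : ∫⁻ ω, ⨆ N, ∏ n ∈ Finset.range N, η n ω ∂P ≤ K := by
    rw [lintegral_iSup hPmeas hPmono]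
    exact iSup_le hbound
  have hiSupMeas : Measurable fun ω => ⨆ N, ∏ n ∈ Finset.range N, η n ω :=
    Measurable.iSup hPmeas
  have hae : ∀ᵐ ω ∂P, (⨆ N, ∏ n ∈ Finset.range N, η n ω) < ∞ :=
    ae_lt_top hiSupMeas (lt_of_le_of_lt hsup ENNReal.ofReal_lt_top).ne
  have haeEq : ∀ᵐ ω ∂P, ENNReal.ofReal (exp (∑' n, h n ω))
      = ⨆ N, ∏ n ∈ Finset.range N, η n ω := by
    filter_upwards [hae] with ω hω
    have hrepr : ∀ N, ∏ n ∈ Finset.range N, η n ω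
        = ENNReal.ofReal (exp (∑ n ∈ Finset.range N, h n ω)) := by
      intro N
      rw [Real.exp_sum, ENNReal.ofReal_prod_of_nonneg fun i _ => (exp_pos _).le]
    have hsummable : Summable fun n => h n ω := by
      apply summable_of_sum_range_le (fun n => hh0 n ω)
        (c := (⨆ N, ∏ n ∈ Finset.range N, η n ω).toReal)
      intro N
      have h1 : ENNReal.ofReal (exp (∑ n ∈ Finset.range N, h n ω))
          ≤ ⨆ N, ∏ n ∈ Finset.range N, η n ω := by
        rw [← hrepr N]
        exact le_iSup (fun N => ∏ n ∈ Finset.range N, η n ω) N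
      have h2 : exp (∑ n ∈ Finset.range N, h n ω)
          ≤ (⨆ N, ∏ n ∈ Finset.range N, η n ω).toReal :=
        (ENNReal.ofReal_le_iff_le_toReal hω.ne).1 h1
      linarith [Real.add_one_le_exp (∑ n ∈ Finset.range N, h n ω)]
    calc ENNReal.ofReal (exp (∑' n, h n ω))
        = ⨆ N, ENNReal.ofReal (exp (∑ n ∈ Finset.range N, h n ω)) :=
          (aux_sup_ofReal_exp (fun n => hh0 n ω) hsummable).symm
      _ = ⨆ N, ∏ n ∈ Finset.range N, η n ω := by
          exact iSup_congr fun N => (hrepr N).symm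
  -- conclusion
  refine ⟨?_, ?_⟩
  · have heq : (fun ω => exp (∑' n, h n ω))
        = fun ω => exp ((∑' n, ENNReal.ofReal (h n ω)).toReal) := by
      funext ω
      rw [aux_tsum_toReal fun n => hh0 n ω]
    rw [heq]
    exact ((Measurable.ennreal_tsum fun n =>
      (hhmeas n).ennreal_ofReal).ennreal_toReal.exp).aestronglyMeasurable
  · rw [hasFiniteIntegral_iff_norm]
    have heq2 : ∀ ω, ENNReal.ofReal ‖exp (∑' n, h n ω)‖
        = ENNReal.ofReal (exp (∑' n, h n ω)) := by
      intro ω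
      rw [Real.norm_eq_abs, Real.abs_exp]
    calc ∫⁻ ω, ENNReal.ofReal ‖exp (∑' n, h n ω)‖ ∂P
        = ∫⁻ ω, ENNReal.ofReal (exp (∑' n, h n ω)) ∂P := lintegral_congr fun ω => heq2 ω
      _ = ∫⁻ ω, ⨆ N, ∏ n ∈ Finset.range N, η n ω ∂P := lintegral_congr_ae haeEq
      _ ≤ K := hsup
      _ < ∞ := ENNReal.ofReal_lt_top
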